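/- For α > 0 irrational, there is no pair of real analytic functions h₁, h₂ defined on neighborhoods of 0 in ℝ, with h₁ nonconstant, such that h₁(t) = h₂(t^α) for all sufficiently small t > 0. -/

import Mathlib

open Set Filter

private lemma aux_tendsto_rpow (β : ℝ) (hβ : 0 < β) :
    Tendsto (fun t : ℝ => t ^ β) (nhdsWithin 0 (Ioi 0)) (nhds 0) := by
  have h := (Real.continuousAt_rpow_const 0 β (Or.inr hβ.le)).tendsto
  rw [Real.zero_rpow hβ.ne'] at h
  exact h.mono_left nhdsWithin_le_nhds

private lemma aux_zero {c d : ℝ} {F G : ℝ → ℝ} (β : ℝ) (hβ : 0 < β)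
    (hF : Tendsto F (nhdsWithin 0 (Ioi 0)) (nhds c))
    (hG : Tendsto G (nhdsWithin 0 (Ioi 0)) (nhds d))
    (h : ∀ᶠ t in nhdsWithin (0:ℝ) (Ioi 0), F t = t ^ β * G t) : c = 0 := by
  have h2 : Tendsto (fun t : ℝ => t ^ β * G t) (nhdsWithin 0 (Ioi 0)) (nhds (0 * d)) :=
    (aux_tendsto_rpow β hβ).mul hG
  rw [zero_mul] at h2
  exact tendsto_nhds_unique (hF.congr' h) h2

/-- For α > 0 irrational, there is no pair of real analytic functions h₁, h₂
near 0 with h₁ nonconstant such that h₁(t) = h₂(t^α) for small t > 0. -/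
theorem no_analytic_pair_for_irrational_power
    (α : ℝ) (hα : 0 < α) (hirr : Irrational α) :
    ¬ ∃ (h₁ h₂ : ℝ → ℝ), AnalyticAt ℝ h₁ 0 ∧ AnalyticAt ℝ h₂ 0 ∧
      (∃ δ > (0 : ℝ), ∀ t ∈ Ioo (0 : ℝ) δ, h₁ t = h₂ (t ^ α)) ∧
      ¬ (∀ᶠ t in nhds (0 : ℝ), h₁ t = h₁ 0) := by
  rintro ⟨h₁, h₂, ha1, ha2, ⟨δ, hδ, heq⟩, hnc⟩
  have hmem : Ioo (0:ℝ) δ ∈ nhdsWithin (0:ℝ) (Ioi 0) :=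
    Ioo_mem_nhdsGT_of_mem ⟨le_refl 0, hδ⟩
  have htα : Tendsto (fun t : ℝ => t ^ α) (nhdsWithin 0 (Ioi 0)) (nhds 0) :=
    aux_tendsto_rpow α hα
  have hc1 : Tendsto h₁ (nhdsWithin 0 (Ioi 0)) (nhds (h₁ 0)) :=
    ha1.continuousAt.tendsto.mono_left nhdsWithin_le_nhds
  have hc2 : Tendsto (fun t : ℝ => h₂ (t ^ α)) (nhdsWithin 0 (Ioi 0)) (nhds (h₂ 0)) :=
    ha2.continuousAt.tendsto.comp htα
  have heq' : ∀ᶠ t in nhdsWithin (0:ℝ) (Ioi 0), h₁ t = h₂ (t ^ α) := by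
    filter_upwards [hmem] with t ht using heq t ht
  have h00 : h₁ 0 = h₂ 0 := tendsto_nhds_unique (hc1.congr' heq') hc2
  set f : ℝ → ℝ := fun t => h₁ t - h₁ 0 with hfdef
  set g : ℝ → ℝ := fun s => h₂ s - h₂ 0 with hgdef
  have hfa : AnalyticAt ℝ f 0 := ha1.sub analyticAt_const
  have hga : AnalyticAt ℝ g 0 := ha2.sub analyticAt_const
  have hfg : ∀ᶠ t in nhdsWithin (0:ℝ) (Ioi 0), f t = g (t ^ α) := by
    filter_upwards [heq'] with t ht
    simp only [hfdef, hgdef, ht, h00]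
  -- f has finite order
  have hford : analyticOrderAt f 0 ≠ ⊤ := by
    intro h
    have h' := analyticOrderAt_eq_top.mp h
    exact hnc (h'.mono fun t ht => sub_eq_zero.mp ht)
  obtain ⟨n, hn⟩ := WithTop.ne_top_iff_exists.mp hford
  obtain ⟨u, hua, hu0, huf⟩ := (hfa.analyticOrderAt_eq_natCast (n := n)).mp hn.symm
  have huf' : ∀ᶠ t in nhdsWithin (0:ℝ) (Ioi 0), f t = t ^ (n:ℝ) * u t := by
    filter_upwards [huf.filter_mono nhdsWithin_le_nhds, self_mem_nhdsWithin] with t ht ht'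
    rw [ht, sub_zero, smul_eq_mul, Real.rpow_natCast]
  have hut : Tendsto u (nhdsWithin 0 (Ioi 0)) (nhds (u 0)) :=
    hua.continuousAt.tendsto.mono_left nhdsWithin_le_nhds
  by_cases hgtop : analyticOrderAt g 0 = ⊤
  · -- g ≡ 0 near 0, so u ≡ 0 on (0, ε), so u 0 = 0, contradiction
    have hg0 : ∀ᶠ s in nhds (0:ℝ), g s = 0 := analyticOrderAt_eq_top.mp hgtop
    have hu_zero : ∀ᶠ t in nhdsWithin (0:ℝ) (Ioi 0), u t = 0 := by
      filter_upwards [hfg, huf', htα.eventually hg0, self_mem_nhdsWithin] with t h1 h2 h3 ht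
      have htpos : (0:ℝ) < t := ht
      have hz : t ^ (n:ℝ) * u t = 0 := by rw [← h2, h1, h3]
      exact (mul_eq_zero.mp hz).resolve_left (Real.rpow_pos_of_pos htpos _).ne'
    exact hu0 (tendsto_nhds_unique (hut.congr' hu_zero) tendsto_const_nhds)
  · obtain ⟨m, hm⟩ := WithTop.ne_top_iff_exists.mp hgtop
    obtain ⟨v, hva, hv0, hvg⟩ := (hga.analyticOrderAt_eq_natCast (n := m)).mp hm.symm
    have hg00 : g 0 = 0 := by simp [hgdef]
    have hm0 : m ≠ 0 := by
      intro h
      subst h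
      have h' := hvg.self_of_nhds
      simp only [sub_zero, pow_zero, one_smul, hg00] at h'
      exact hv0 h'.symm
    have hβ : α * m ≠ (n:ℝ) := by
      intro h
      apply hirr
      refine ⟨(n : ℚ) / (m : ℚ), ?_⟩
      have hmR : (m : ℝ) ≠ 0 := Nat.cast_ne_zero.mpr hm0
      push_cast
      rw [div_eq_iff hmR, mul_comm]
      linarith [h]
    have hvt' : Tendsto (fun t : ℝ => v (t ^ α)) (nhdsWithin 0 (Ioi 0)) (nhds (v 0)) :=
      hva.continuousAt.tendsto.comp htα
    have key : ∀ᶠ t in nhdsWithin (0:ℝ) (Ioi 0),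
        t ^ (n:ℝ) * u t = t ^ (α * m) * v (t ^ α) := by
      filter_upwards [huf', hfg, htα.eventually hvg, self_mem_nhdsWithin] with t h1 h2 h3 ht
      have htpos : (0:ℝ) < t := ht
      rw [← h1, h2, h3, sub_zero, smul_eq_mul, ← Real.rpow_natCast (t ^ α) m,
        ← Real.rpow_mul htpos.le]
    rcases lt_or_gt_of_ne hβ with hlt | hgt
    · -- α*m < n : v 0 = 0
      have key' : ∀ᶠ t in nhdsWithin (0:ℝ) (Ioi 0),
          v (t ^ α) = t ^ ((n:ℝ) - α * m) * u t := by
        filter_upwards [key, self_mem_nhdsWithin] with t h ht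
        have htpos : (0:ℝ) < t := ht
        have hne : t ^ (α * m) ≠ 0 := (Real.rpow_pos_of_pos htpos _).ne'
        rw [Real.rpow_sub htpos, div_mul_eq_mul_div, eq_div_iff hne]
        linear_combination -h
      exact hv0 (aux_zero _ (by linarith) hvt' hut key')
    · -- n < α*m : u 0 = 0
      have key' : ∀ᶠ t in nhdsWithin (0:ℝ) (Ioi 0),
          u t = t ^ (α * m - (n:ℝ)) * v (t ^ α) := by
        filter_upwards [key, self_mem_nhdsWithin] with t h ht
        have htpos : (0:ℝ) < t := ht
        have hne : t ^ ((n:ℝ)) ≠ 0 := (Real.rpow_pos_of_pos htpos _).ne'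
        rw [Real.rpow_sub htpos, div_mul_eq_mul_div, eq_div_iff hne]
        linear_combination h
      exact hu0 (aux_zero _ (by linarith) hut hvt' key')
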